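/- Let (X,T) be a semi-simple system (every point is a minimal point). If the orbit-closure map x ↦ cl O(x,T) from X to the hyperspace 2^X is continuous at some point x₀, then it is continuous at every point of the orbit closure cl O(x₀,T). -/

import Mathlib

open Set Filter TopologicalSpace

/-- The `n`-th iterate (n ∈ ℤ) of a homeomorphism. -/
def hIter {X : Type*} [TopologicalSpace X] (T : X ≃ₜ X) (n : ℤ) : X → X :=
  fun x => (T.toEquiv ^ n) x

/-- The full orbit {Tⁿ x : n ∈ ℤ} of a point. -/
def orb {X : Type*} [TopologicalSpace X] (T : X ≃ₜ X) (x : X) : Set X :=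
  Set.range fun n : ℤ => hIter T n x

/-- The orbit closure of a point. -/
def orbCl {X : Type*} [TopologicalSpace X] (T : X ≃ₜ X) (x : X) : Set X :=
  closure (orb T x)

/-- A system is minimal if it has no proper nonempty closed invariant subset. -/
def IsMinimalSys {X : Type*} [TopologicalSpace X] (T : X → X) : Prop :=
  ∀ A : Set X, IsClosed A → A.Nonempty → T '' A = A → A = Set.univ

/-- `J` is a joining of the subsystems `(K,T)` and `(L,S)`: a closed `T × S`-invariant
subset of `K ×ˢ L` projecting onto `K` and onto `L`. -/
def IsJoiningOn {X Y : Type*} [TopologicalSpace X] [TopologicalSpace Y]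
    (T : X → X) (S : Y → Y) (K : Set X) (L : Set Y) (J : Set (X × Y)) : Prop :=
  IsClosed J ∧ J ⊆ K ×ˢ L ∧ Prod.map T S '' J = J ∧
    Prod.fst '' J = K ∧ Prod.snd '' J = L

/-- The subsystems `(K,T)` and `(L,S)` are disjoint: their only joining is `K ×ˢ L`. -/
def DisjointOn {X Y : Type*} [TopologicalSpace X] [TopologicalSpace Y]
    (T : X → X) (S : Y → Y) (K : Set X) (L : Set Y) : Prop :=
  ∀ J : Set (X × Y), IsJoiningOn T S K L J → J = K ×ˢ L

/-- A point is a minimal point if its orbit closure is a minimal set. -/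
def IsMinimalPt {X : Type*} [TopologicalSpace X] (T : X ≃ₜ X) (x : X) : Prop :=
  ∀ B : Set X, IsClosed B → B.Nonempty → B ⊆ orbCl T x → ⇑T '' B = B → B = orbCl T x

/-- The orbit-closure map into the hyperspace of nonempty compact subsets of `X`
with the Hausdorff metric. -/
noncomputable def orbClC {X : Type*} [MetricSpace X] [CompactSpace X] (T : X ≃ₜ X)
    (x : X) : NonemptyCompacts X :=
  ⟨⟨orbCl T x, isClosed_closure.isCompact⟩,
    ⟨x, subset_closure ⟨0, by simp [hIter]⟩⟩⟩


section Aux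

variable {X : Type*} [TopologicalSpace X] (T : X ≃ₜ X)

lemma hIter_continuous (n : ℤ) : Continuous (hIter T n) := by
  induction n using Int.induction_on with
  | zero => convert continuous_id using 1; funext x; simp [hIter]
  | succ n ih =>
      have : hIter T (n + 1) = hIter T n ∘ ⇑T := by
        funext x
        simp only [hIter, Function.comp_apply, zpow_add, zpow_one, Equiv.Perm.mul_apply]
        rfl
      rw [this]; exact ih.comp T.continuous
  | pred n ih =>
      have : hIter T (-n - 1) = hIter T (-n) ∘ ⇑T.symm := by
        funext x
        simp only [hIter, Function.comp_apply, sub_eq_add_neg, zpow_add, zpow_neg, zpow_one,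
          Equiv.Perm.mul_apply]
        rfl
      rw [this]; exact ih.comp T.symm.continuous

lemma orb_hIter (n : ℤ) (x : X) : orb T (hIter T n x) = orb T x := by
  ext z
  simp only [orb, mem_range, hIter]
  constructor
  · rintro ⟨m, rfl⟩
    exact ⟨m + n, by rw [zpow_add, Equiv.Perm.mul_apply]⟩
  · rintro ⟨m, rfl⟩
    exact ⟨m - n, by rw [← Equiv.Perm.mul_apply, ← zpow_add, sub_add_cancel]⟩

lemma mem_orb_self (x : X) : x ∈ orb T x := ⟨0, by simp [hIter]⟩

lemma image_T_orb (x : X) : ⇑T '' orb T x = orb T x := by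
  ext z
  simp only [orb, image, mem_range, mem_setOf_eq, hIter]
  constructor
  · rintro ⟨_, ⟨m, rfl⟩, rfl⟩
    exact ⟨m + 1, by rw [add_comm, zpow_add, zpow_one, Equiv.Perm.mul_apply]; rfl⟩
  · rintro ⟨m, rfl⟩
    refine ⟨(T.toEquiv ^ (m - 1)) x, ⟨m - 1, rfl⟩, ?_⟩
    show T.toEquiv _ = _
    rw [← Equiv.Perm.mul_apply, ← zpow_one_add, add_sub_cancel]

lemma image_T_orbCl (x : X) : ⇑T '' orbCl T x = orbCl T x := by
  unfold orbCl
  rw [Homeomorph.image_closure, image_T_orb]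

lemma hIter_mem_orbCl {x y : X} (n : ℤ) (hy : y ∈ orbCl T x) :
    hIter T n y ∈ orbCl T x := by
  have h1 : hIter T n '' orb T x ⊆ orb T x := by
    rintro _ ⟨_, ⟨m, rfl⟩, rfl⟩
    exact ⟨n + m, by simp only [hIter]; rw [zpow_add, Equiv.Perm.mul_apply]⟩
  have := image_closure_subset_closure_image (s := orb T x) (hIter_continuous T n)
  exact closure_mono h1 (this ⟨y, hy, rfl⟩)

lemma orbCl_eq_of_mem {x y : X} (hmin : IsMinimalPt T x) (hy : y ∈ orbCl T x) :
    orbCl T y = orbCl T x := by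
  apply hmin
  · exact isClosed_closure
  · exact ⟨y, subset_closure (mem_orb_self T y)⟩
  · apply closure_minimal _ isClosed_closure
    rintro _ ⟨n, rfl⟩
    exact hIter_mem_orbCl T n hy
  · exact image_T_orbCl T y

end Aux

/-- In a semi-simple system (every point minimal), if the orbit-closure map is
continuous at x₀ then it is continuous at every point of the orbit closure of x₀. -/
theorem stmt_15 {X : Type*} [MetricSpace X] [CompactSpace X] (T : X ≃ₜ X)
    (hss : ∀ x : X, IsMinimalPt T x)
    (x₀ : X) (hcont : ContinuousAt (orbClC T) x₀) :
    ∀ y ∈ orbCl T x₀, ContinuousAt (orbClC T) y := by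
  intro y hy
  have hEq : orbCl T y = orbCl T x₀ := orbCl_eq_of_mem T (hss x₀) hy
  have hC : orbClC T y = orbClC T x₀ := by
    apply NonemptyCompacts.ext
    exact hEq
  rw [Metric.continuousAt_iff] at hcont ⊢
  intro ε hε
  obtain ⟨δ, hδ, hδ'⟩ := hcont ε hε
  have hx₀ : x₀ ∈ closure (orb T y) := by
    have : x₀ ∈ orbCl T x₀ := subset_closure (mem_orb_self T x₀)
    rw [← hEq] at this
    exact this
  obtain ⟨w, hw, hwd⟩ := Metric.mem_closure_iff.mp hx₀ δ hδ
  obtain ⟨n, rfl⟩ := hw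
  have hcn := (hIter_continuous T n).continuousAt (x := y)
  rw [Metric.continuousAt_iff] at hcn
  obtain ⟨δ₁, hδ₁, h₁⟩ := hcn (δ - dist x₀ (hIter T n y)) (by linarith)
  refine ⟨δ₁, hδ₁, fun {z} hz => ?_⟩
  have h2 : dist (hIter T n z) x₀ < δ := by
    have h3 := h₁ hz
    have h4 := dist_triangle (hIter T n z) (hIter T n y) x₀
    have h5 : dist (hIter T n y) x₀ = dist x₀ (hIter T n y) := dist_comm _ _
    linarith
  have h6 := hδ' h2
  have h7 : orbClC T z = orbClC T (hIter T n z) := by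
    apply NonemptyCompacts.ext
    show orbCl T z = orbCl T (hIter T n z)
    unfold orbCl
    rw [orb_hIter]
  rw [hC, h7]
  exact h6
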